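/- As n → ∞, the integral ∫_{-∞}^{∞} (sin x / x)^{2n} dx is asymptotic to √(3π/n). -/

import Mathlib

open MeasureTheory Filter
open Real

lemma aux_mono {f : ℝ → ℝ} {f' : ℝ → ℝ} (hd : ∀ x, HasDerivAt f (f' x) x)
    (h0 : ∀ x, 0 ≤ x → 0 ≤ f' x) (hf0 : f 0 = 0) {u : ℝ} (hu : 0 ≤ u) : 0 ≤ f u := by
  have : MonotoneOn f (Set.Ici 0) := by
    apply monotoneOn_of_deriv_nonneg (convex_Ici 0)
      (fun x _ => (hd x).continuousAt.continuousWithinAt)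
      (fun x hx => ((hd x).differentiableAt).differentiableWithinAt)
    intro x hx
    rw [(hd x).deriv]
    exact h0 x (le_of_lt (by simpa using hx))
  have := this (Set.self_mem_Ici) (Set.mem_Ici.2 hu) hu
  linarith [hf0 ▸ this]

lemma pow_div_hasDeriv (k : ℕ) (c : ℝ) (x : ℝ) (d : ℝ) (h : (k:ℝ) * x^(k-1) / c = d) :
    HasDerivAt (fun y : ℝ => y^k/c) d x := by
  subst h; exact (hasDerivAt_pow k x).div_const c

lemma sin_lower {u : ℝ} (hu : 0 ≤ u) : u - u^3/6 ≤ Real.sin u := by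
  have := aux_mono (f := fun x => Real.sin x - x + x^3/6) (f' := fun x => Real.cos x - 1 + x^2/2)
    (fun x => by
      have h2 := pow_div_hasDeriv 3 6 x (x^2/2) (by norm_num; ring)
      have := ((Real.hasDerivAt_sin x).sub (hasDerivAt_id' (x := x))).add h2
      exact this.congr_deriv (by ring))
    (fun x hx => by nlinarith [Real.one_sub_sq_div_two_le_cos (x := x)])
    (by simp) hu
  linarith

lemma cos_upper {u : ℝ} (hu : 0 ≤ u) : Real.cos u ≤ 1 - u^2/2 + u^4/24 := by
  have := aux_mono (f := fun x => 1 - x^2/2 + x^4/24 - Real.cos x)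
    (f' := fun x => -x + x^3/6 + Real.sin x)
    (fun x => by
      have a1 := pow_div_hasDeriv 2 2 x x (by norm_num)
      have a2 := pow_div_hasDeriv 4 24 x (x^3/6) (by norm_num; ring)
      have := (((hasDerivAt_const x (1:ℝ)).sub a1).add a2).sub (Real.hasDerivAt_cos x)
      exact this.congr_deriv (by ring))
    (fun x hx => by nlinarith [sin_lower hx])
    (by simp) hu
  linarith

lemma sin_upper {u : ℝ} (hu : 0 ≤ u) : Real.sin u ≤ u - u^3/6 + u^5/120 := by
  have := aux_mono (f := fun x => x - x^3/6 + x^5/120 - Real.sin x)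
    (f' := fun x => 1 - x^2/2 + x^4/24 - Real.cos x)
    (fun x => by
      have a1 := pow_div_hasDeriv 3 6 x (x^2/2) (by norm_num; ring)
      have a2 := pow_div_hasDeriv 5 120 x (x^4/24) (by norm_num; ring)
      have := (((hasDerivAt_id' (x := x)).sub a1).add a2).sub (Real.hasDerivAt_sin x)
      exact this.congr_deriv (by ring))
    (fun x hx => by linarith [cos_upper hx])
    (by simp) hu
  linarith

lemma sin_mul_lb (u : ℝ) : u^2 - u^4/6 ≤ Real.sin u * u := by
  rcases le_or_gt 0 u with h | h
  · nlinarith [sin_lower h]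
  · have h' : 0 ≤ -u := by linarith
    have := sin_lower h'
    rw [Real.sin_neg] at this
    nlinarith

lemma sin_mul_ub (u : ℝ) : Real.sin u * u ≤ u^2 - u^4/6 + u^6/120 := by
  rcases le_or_gt 0 u with h | h
  · nlinarith [sin_upper h]
  · have h' : 0 ≤ -u := by linarith
    have := sin_upper h'
    rw [Real.sin_neg] at this
    nlinarith

lemma sinc_pos_lt_one {u : ℝ} (h0 : u ≠ 0) (h1 : |u| ≤ 1) :
    0 < Real.sin u / u ∧ Real.sin u / u < 1 := by
  have hu2 : (0:ℝ) < u^2 := by positivity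
  have habs : u^2 ≤ 1 := by nlinarith [abs_nonneg u, sq_abs u, abs_le.1 h1]
  have e : Real.sin u / u = Real.sin u * u / u^2 := by field_simp
  constructor
  · rw [e]; apply div_pos _ hu2; nlinarith [sin_mul_lb u]
  · rw [e, div_lt_one hu2]
    have h4 : (0:ℝ) < u^4 := by positivity
    have h6 : u^6 ≤ u^4 := by nlinarith
    nlinarith [sin_mul_ub u]

lemma sinc_sub_one_tendsto :
    Tendsto (fun u : ℝ => (Real.sin u / u - 1) / u^2) (nhdsWithin 0 {0}ᶜ) (nhds (-(1/6))) := by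
  have hev : ∀ᶠ u : ℝ in nhdsWithin 0 {0}ᶜ, u ≠ 0 := by
    filter_upwards [self_mem_nhdsWithin] with u hu using hu
  have e : ∀ u : ℝ, u ≠ 0 → (Real.sin u / u - 1) / u^2 = (Real.sin u * u - u^2) / u^4 := by
    intro u hu; field_simp
  apply tendsto_of_tendsto_of_tendsto_of_le_of_le' (g := fun _ : ℝ => -(1/6))
    (h := fun u : ℝ => -(1/6) + u^2/120) tendsto_const_nhds
  · have : Tendsto (fun u : ℝ => -(1/6) + u^2/120) (nhds 0) (nhds (-(1/6))) := by
      have hc : Continuous fun u : ℝ => -(1/6 : ℝ) + u^2/120 := by continuity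
      have := hc.tendsto (0:ℝ)
      simpa using this
    exact this.mono_left nhdsWithin_le_nhds
  · filter_upwards [hev] with u hu
    have hu4 : (0:ℝ) < u^4 := by positivity
    rw [e u hu, le_div_iff₀ hu4]
    nlinarith [sin_mul_lb u]
  · filter_upwards [hev] with u hu
    have hu4 : (0:ℝ) < u^4 := by positivity
    rw [e u hu, div_le_iff₀ hu4]
    nlinarith [sin_mul_ub u]

lemma sinc_tendsto_one :
    Tendsto (fun u : ℝ => Real.sin u / u) (nhdsWithin 0 {0}ᶜ) (nhds 1) := by
  have h1 : Tendsto (fun u : ℝ => 1 + u^2 * ((Real.sin u / u - 1) / u^2))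
      (nhdsWithin 0 {0}ᶜ) (nhds 1) := by
    have hp : Tendsto (fun u : ℝ => u^2) (nhdsWithin 0 {0}ᶜ) (nhds 0) := by
      have := (continuous_pow 2).tendsto (0:ℝ)
      simpa using this.mono_left nhdsWithin_le_nhds
    have := (hp.mul sinc_sub_one_tendsto).const_add 1
    simpa using this
  apply h1.congr'
  filter_upwards [self_mem_nhdsWithin] with u hu
  have hu : u ≠ 0 := hu
  field_simp
  ring

lemma tendsto_log_sinc :
    Tendsto (fun u : ℝ => Real.log (Real.sin u / u) / u^2) (nhdsWithin 0 {0}ᶜ)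
      (nhds (-(1/6))) := by
  have hev : ∀ᶠ u : ℝ in nhdsWithin 0 {0}ᶜ, u ≠ 0 ∧ |u| ≤ 1 := by
    have h1 : ∀ᶠ u : ℝ in nhds (0:ℝ), |u| ≤ 1 := by
      filter_upwards [Metric.closedBall_mem_nhds (0:ℝ) one_pos] with u hu
      simpa [Real.dist_eq] using hu
    filter_upwards [self_mem_nhdsWithin, h1.filter_mono nhdsWithin_le_nhds] with u h h' using ⟨h, h'⟩
  have hslope : Tendsto (slope Real.log 1) (nhdsWithin 1 {1}ᶜ) (nhds 1) := by
    have := hasDerivAt_iff_tendsto_slope.mp (Real.hasDerivAt_log one_ne_zero)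
    simpa using this
  have hcomp : Tendsto (fun u : ℝ => Real.sin u / u) (nhdsWithin 0 {0}ᶜ)
      (nhdsWithin 1 {1}ᶜ) := by
    rw [tendsto_nhdsWithin_iff]
    refine ⟨sinc_tendsto_one, ?_⟩
    filter_upwards [hev] with u ⟨hu, h1⟩
    exact ne_of_lt (sinc_pos_lt_one hu h1).2
  have hprod := (hslope.comp hcomp).mul sinc_sub_one_tendsto
  rw [one_mul] at hprod
  apply hprod.congr'
  filter_upwards [hev] with u ⟨hu, h1⟩
  obtain ⟨hpos, hlt⟩ := sinc_pos_lt_one hu h1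
  have hne1 : Real.sin u / u - 1 ≠ 0 := by linarith
  have hu2 : u^2 ≠ 0 := pow_ne_zero _ hu
  simp only [Function.comp_apply]
  set s := Real.sin u / u with hs
  rw [slope_def_field, Real.log_one, sub_zero]
  field_simp

lemma abs_sinc_le_pi {u : ℝ} (h0 : u ≠ 0) (h : |u| ≤ π) :
    |Real.sin u / u| ≤ (1 + u^2/6)⁻¹ := by
  have key : ∀ v : ℝ, 0 < v → v ≤ π → |Real.sin v / v| ≤ (1 + v^2/6)⁻¹ := by
    intro v hv hvpi
    have hs : 0 ≤ Real.sin v := Real.sin_nonneg_of_nonneg_of_le_pi hv.le hvpi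
    have h14 : v^2 ≤ 14 := by nlinarith [Real.pi_lt_d2]
    have hp : (0:ℝ) < 1 + v^2/6 := by positivity
    have hmain : Real.sin v * (1 + v^2/6) ≤ v := by
      nlinarith [mul_le_mul_of_nonneg_right (sin_upper hv.le) hp.le,
        mul_nonneg (pow_nonneg hv.le 5) (by linarith : (0:ℝ) ≤ 14 - v^2)]
    rw [abs_of_nonneg (by positivity), inv_eq_one_div, div_le_div_iff₀ hv hp]
    linarith
  rcases h0.lt_or_gt with hneg | hpos
  · have := key (-u) (by linarith) (by rwa [abs_of_neg hneg] at h)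
    rw [Real.sin_neg, neg_div_neg_eq] at this
    simpa using this
  · exact key u hpos (by rwa [abs_of_pos hpos] at h)

lemma nat_le_pi_sq_pow (n : ℕ) : (n : ℝ) ≤ (π^2)^(n-1) := by
  have h2 : n ≤ 2^(n-1) := by
    have := Nat.lt_two_pow_self (n := n-1)
    rcases n with _ | m
    · simp
    · simpa [Nat.succ_sub_one] using this
  have h1 : (n : ℝ) ≤ (2:ℝ)^(n-1) := by exact_mod_cast h2
  refine h1.trans (pow_le_pow_left₀ (by norm_num) ?_ _)
  nlinarith [Real.pi_gt_three]

lemma f_le_bound (n : ℕ) (hn : 1 ≤ n) (t : ℝ) :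
    (Real.sin (t / Real.sqrt n) / (t / Real.sqrt n)) ^ (2*n) ≤ (1 + t^2/3)⁻¹ + 2*(1+t^2)⁻¹ := by
  have hb1 : (0:ℝ) < 1 + t^2/3 := by positivity
  have hb2 : (0:ℝ) < 1 + t^2 := by positivity
  by_cases ht : t = 0
  · subst ht
    simp only [zero_div, Real.sin_zero, div_zero]
    rw [zero_pow (by omega : 2*n ≠ 0)]
    positivity
  have hsn : (0:ℝ) < Real.sqrt n :=
    Real.sqrt_pos.2 (by exact_mod_cast Nat.pos_of_ne_zero (by omega))
  set u := t / Real.sqrt n with hudef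
  have hu : u ≠ 0 := div_ne_zero ht hsn.ne'
  have hnu : (n:ℝ) * u^2 = t^2 := by
    rw [hudef, div_pow, Real.sq_sqrt (Nat.cast_nonneg n)]
    field_simp
  have hu2pos : (0:ℝ) < u^2 := by positivity
  have habs : (Real.sin u / u) ^ (2*n) = |Real.sin u / u| ^ (2*n) :=
    ((even_two_mul n).pow_abs _).symm
  rcases le_or_gt |u| π with h | h
  · have h3 : (1:ℝ) + t^2/3 ≤ (1 + u^2/6) ^ (2*n) := by
      have := one_add_mul_le_pow (a := u^2/6) (by nlinarith [sq_nonneg u] : (-2:ℝ) ≤ u^2/6) (2*n)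
      have he : 1 + ((2*n : ℕ):ℝ) * (u^2/6) = 1 + t^2/3 := by
        push_cast
        rw [← hnu]; ring
      linarith [he ▸ this]
    calc (Real.sin u / u) ^ (2*n) = |Real.sin u / u| ^ (2*n) := habs
      _ ≤ ((1 + u^2/6)⁻¹) ^ (2*n) := pow_le_pow_left₀ (abs_nonneg _) (abs_sinc_le_pi hu h) _
      _ = ((1 + u^2/6) ^ (2*n))⁻¹ := inv_pow _ _
      _ ≤ (1 + t^2/3)⁻¹ := inv_anti₀ hb1 h3
      _ ≤ _ := le_add_of_nonneg_right (by positivity)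
  · have hpiu : π^2 < u^2 := by nlinarith [sq_abs u, Real.pi_pos]
    have hsin : |Real.sin u / u| ≤ |u|⁻¹ := by
      rw [abs_div, div_le_iff₀ (abs_pos.2 hu), inv_mul_cancel₀ (abs_pos.2 hu).ne']
      exact abs_le.2 ⟨Real.neg_one_le_sin u, Real.sin_le_one u⟩
    have ht2 : t^2 ≤ (u^2)^n := by
      have e1 : (n:ℝ) ≤ (π^2)^(n-1) := nat_le_pi_sq_pow n
      have e2 : (π^2)^(n-1) ≤ (u^2)^(n-1) := pow_le_pow_left₀ (sq_nonneg π) hpiu.le _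
      have e3 : (u^2)^(n-1) * u^2 = (u^2)^n := by
        rw [← pow_succ]
        congr 1
        omega
      calc t^2 = (n:ℝ) * u^2 := hnu.symm
        _ ≤ (u^2)^(n-1) * u^2 := by nlinarith
        _ = (u^2)^n := e3
    have ht2pos : (0:ℝ) < t^2 := by positivity
    have htlarge : (1:ℝ) < t^2 := by
      have : π^2 ≤ t^2 := by
        calc π^2 ≤ u^2 := hpiu.le
          _ = 1 * u^2 := (one_mul _).symm
          _ ≤ (n:ℝ) * u^2 := by
            apply mul_le_mul_of_nonneg_right _ hu2pos.le
            exact_mod_cast hn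
          _ = t^2 := hnu
      nlinarith [Real.pi_gt_three]
    calc (Real.sin u / u) ^ (2*n) = |Real.sin u / u| ^ (2*n) := habs
      _ ≤ (|u|⁻¹) ^ (2*n) := pow_le_pow_left₀ (abs_nonneg _) hsin _
      _ = ((u^2)^n)⁻¹ := by
        rw [inv_pow]
        congr 1
        rw [show 2*n = n*2 by ring, pow_mul', sq_abs]
      _ ≤ (t^2)⁻¹ := inv_anti₀ ht2pos ht2
      _ ≤ 2*(1+t^2)⁻¹ := by
        rw [inv_eq_one_div (t^2), show 2*(1+t^2)⁻¹ = 2/(1+t^2) by rw [div_eq_mul_inv],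
          div_le_div_iff₀ ht2pos hb2]
        nlinarith
      _ ≤ _ := le_add_of_nonneg_left (by positivity)

lemma sqrt_nat_tendsto : Tendsto (fun n : ℕ => Real.sqrt n) atTop atTop := by
  have h1 : Tendsto Real.sqrt atTop atTop := by
    apply tendsto_atTop_atTop_of_monotone (fun a b h => Real.sqrt_le_sqrt h)
    intro b
    exact ⟨b^2, by rw [Real.sqrt_sq_eq_abs]; exact le_abs_self b⟩
  exact h1.comp tendsto_natCast_atTop_atTop

lemma tendsto_f (t : ℝ) (ht : t ≠ 0) :
    Tendsto (fun n : ℕ => (Real.sin (t / Real.sqrt n) / (t / Real.sqrt n)) ^ (2*n)) atTop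
      (nhds (Real.exp (-(t^2/3)))) := by
  set u : ℕ → ℝ := fun n => t / Real.sqrt n with hudef
  have hev1 : ∀ᶠ n : ℕ in atTop, 0 < Real.sqrt n := by
    filter_upwards [eventually_ge_atTop 1] with n hn
    exact Real.sqrt_pos.2 (by exact_mod_cast Nat.pos_of_ne_zero (by omega))
  have hune : ∀ᶠ n : ℕ in atTop, u n ≠ 0 := by
    filter_upwards [hev1] with n hn
    exact div_ne_zero ht hn.ne'
  have hu : Tendsto u atTop (nhdsWithin 0 {0}ᶜ) := by
    rw [tendsto_nhdsWithin_iff]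
    exact ⟨Tendsto.div_atTop tendsto_const_nhds sqrt_nat_tendsto, hune⟩
  have hA : Tendsto (fun n : ℕ => 2*t^2 * (Real.log (Real.sin (u n) / u n) / (u n)^2)) atTop
      (nhds (-(t^2/3))) := by
    have := (tendsto_log_sinc.comp hu).const_mul (2*t^2)
    convert this using 2
    · rfl
    · ring
  have hexp := (Real.continuous_exp.tendsto _).comp hA
  have hball : ∀ᶠ x : ℝ in nhdsWithin 0 {0}ᶜ, |x| ≤ 1 := by
    apply Filter.Eventually.filter_mono nhdsWithin_le_nhds
    filter_upwards [Metric.closedBall_mem_nhds (0:ℝ) one_pos] with x hx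
    simpa [Real.dist_eq] using hx
  have hsmall : ∀ᶠ n : ℕ in atTop, |u n| ≤ 1 := hu.eventually hball
  apply Tendsto.congr' _ hexp
  filter_upwards [hune, hsmall, hev1] with n hn h1 hp
  have hs := (sinc_pos_lt_one hn h1).1
  have hn0 : (0:ℝ) < (n:ℝ) := by
    have := Real.sqrt_pos.1 hp
    exact_mod_cast this
  have hu2 : (u n)^2 = t^2 / n := by
    rw [hudef]
    simp only
    rw [div_pow, Real.sq_sqrt (Nat.cast_nonneg n)]
  simp only [Function.comp_apply]
  rw [show 2*t^2 * (Real.log (Real.sin (u n)/u n) / (u n)^2)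
      = ((2*n : ℕ):ℝ) * Real.log (Real.sin (u n)/u n) by
    rw [hu2]; push_cast; field_simp]
  rw [Real.exp_nat_mul, Real.exp_log hs]

lemma bound_integrable : Integrable (fun t : ℝ => (1 + t^2/3)⁻¹ + 2*(1+t^2)⁻¹) := by
  apply Integrable.add
  · have h3 : Real.sqrt 3 ≠ 0 := by positivity
    have hi := integrable_inv_one_add_sq.comp_div (R := Real.sqrt 3) h3
    refine hi.congr (ae_of_all _ fun x => ?_)
    show (1 + (x / Real.sqrt 3)^2)⁻¹ = (1 + x^2/3)⁻¹
    rw [div_pow, Real.sq_sqrt (by norm_num : (0:ℝ) ≤ 3)]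
  · exact integrable_inv_one_add_sq.const_mul 2


/-- As `n → ∞`, `∫_ℝ (sin x / x)^(2n) dx ∼ √(3π/n)`. -/
theorem sinc_pow_integral_asymptotic :
    Tendsto (fun n : ℕ => (∫ x : ℝ, (Real.sin x / x) ^ (2 * n)) / Real.sqrt (3 * Real.pi / n))
      atTop (nhds 1) := by
  have hsqrtpos : (0:ℝ) < Real.sqrt (3*π) := Real.sqrt_pos.2 (by positivity)
  have hDCT : Tendsto
      (fun n : ℕ => ∫ t : ℝ, (Real.sin (t / Real.sqrt n) / (t / Real.sqrt n)) ^ (2*n))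
      atTop (nhds (∫ t : ℝ, Real.exp (-(t^2/3)))) := by
    apply tendsto_integral_filter_of_dominated_convergence
      (bound := fun t : ℝ => (1 + t^2/3)⁻¹ + 2*(1+t^2)⁻¹)
    · apply Eventually.of_forall
      intro n
      apply Measurable.aestronglyMeasurable
      exact ((Real.measurable_sin.comp (measurable_id.div_const _)).div
        (measurable_id.div_const _)).pow_const _
    · filter_upwards [eventually_ge_atTop 1] with n hn
      apply ae_of_all
      intro t
      rw [Real.norm_eq_abs, abs_of_nonneg ((even_two_mul n).pow_nonneg _)]
      exact f_le_bound n hn t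
    · exact bound_integrable
    · have h0 : ∀ᵐ t : ℝ, t ≠ 0 := by
        rw [ae_iff]
        have : {a : ℝ | ¬ a ≠ 0} = {0} := by ext a; simp
        rw [this, Real.volume_singleton]
      filter_upwards [h0] with t ht
      exact tendsto_f t ht
  have hgauss : (∫ t : ℝ, Real.exp (-(t^2/3))) = Real.sqrt (3*π) := by
    have hfe : (fun t : ℝ => Real.exp (-(t^2/3))) = fun t : ℝ => Real.exp (-(3⁻¹:ℝ)*t^2) := by
      funext t; ring_nf
    rw [hfe, integral_gaussian, show π / (3⁻¹:ℝ) = 3*π by rw [div_eq_mul_inv, inv_inv, mul_comm]]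
  have main : Tendsto (fun n : ℕ =>
      (∫ t : ℝ, (Real.sin (t/Real.sqrt n)/(t/Real.sqrt n))^(2*n)) / Real.sqrt (3*π))
      atTop (nhds 1) := by
    have := hDCT.div_const (Real.sqrt (3*π))
    rw [hgauss, div_self hsqrtpos.ne'] at this
    exact this
  apply Tendsto.congr' _ main
  filter_upwards [eventually_ge_atTop 1] with n hn
  have hsn : (0:ℝ) < Real.sqrt n :=
    Real.sqrt_pos.2 (by exact_mod_cast Nat.pos_of_ne_zero (by omega))
  have hcv := Measure.integral_comp_div (fun x : ℝ => (Real.sin x / x)^(2*n)) (Real.sqrt n)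
  rw [abs_of_pos hsn, smul_eq_mul] at hcv
  rw [hcv, Real.sqrt_div (by positivity : (0:ℝ) ≤ 3*π) n, div_div_eq_mul_div]
  ring
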